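/- As formal power series, ∑_{n≥0} n! x^n = ∑_{n≥0} V_n x^n c(x)^{2n+1}, where c(x) is the generating function of the Catalan numbers and V_n is the n-th straight ménage number. -/

import Mathlib

open Finset PowerSeries

/-- A straight ménage permutation: `π i ≠ i` and `π i ≠ i + 1` for all `i`. -/
def IsStraightMenage {n : ℕ} (π : Equiv.Perm (Fin n)) : Prop :=
  ∀ i : Fin n, π i ≠ i ∧ (π i : ℕ) ≠ (i : ℕ) + 1

instance {n : ℕ} (π : Equiv.Perm (Fin n)) : Decidable (IsStraightMenage π) := by
  unfold IsStraightMenage; infer_instance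

/-- The `n`-th straight ménage number. -/
def straightMenage (n : ℕ) : ℕ :=
  (Finset.univ.filter fun π : Equiv.Perm (Fin n) => IsStraightMenage π).card

/-- The generating function of the Catalan numbers `C_k = (2k)!/(k!(k+1)!)` over `ℚ`. -/
noncomputable def catGF : PowerSeries ℚ :=
  PowerSeries.mk fun k => ((2 * k).factorial : ℚ) / ((k.factorial : ℚ) * ((k + 1).factorial : ℚ))

lemma coeff_catGF (k : ℕ) : PowerSeries.coeff k catGF = (catalan k : ℚ) := by
  have h := succ_mul_catalan_eq_centralBinom k
  have h2 : (2*k).choose k * (k.factorial * k.factorial) = (2*k).factorial := by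
    have := Nat.choose_mul_factorial_mul_factorial (show k ≤ 2*k by omega)
    simpa [two_mul, Nat.add_sub_cancel, mul_assoc] using this
  have h3 : (k+1) * catalan k * (k.factorial * k.factorial) = (2*k).factorial := by
    rw [h, Nat.centralBinom]; exact h2
  have hk : (k.factorial : ℚ) ≠ 0 := Nat.cast_ne_zero.mpr k.factorial_ne_zero
  have hk1 : ((k+1).factorial : ℚ) ≠ 0 := Nat.cast_ne_zero.mpr (k+1).factorial_ne_zero
  simp only [catGF, PowerSeries.coeff_mk]
  rw [div_eq_iff (mul_ne_zero hk hk1)]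
  have : ((2*k).factorial : ℚ) = ((k+1) * catalan k * (k.factorial * k.factorial) : ℕ) := by
    rw [h3]
  rw [this]
  rw [Nat.factorial_succ]
  push_cast
  ring

lemma catGF_eq : catGF = 1 + PowerSeries.X * catGF ^ 2 := by
  ext k
  cases k with
  | zero => simp [coeff_catGF]
  | succ n =>
    rw [coeff_catGF]
    simp only [map_add, PowerSeries.coeff_one, PowerSeries.coeff_succ_X_mul]
    rw [sq, PowerSeries.coeff_mul, catalan_succ']
    push_cast [coeff_catGF]
    simp

lemma one_sub_catGF_pow (j : ℕ) :
    (1 - catGF) ^ j = (-1 : PowerSeries ℚ) ^ j * PowerSeries.X ^ j * catGF ^ (2 * j) := by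
  have h : 1 - catGF = -1 * PowerSeries.X * catGF ^ 2 := by
    linear_combination (-1 : PowerSeries ℚ) * catGF_eq
  rw [h, mul_pow, mul_pow, ← pow_mul]

lemma coeff_mul_one_sub_pow_eq_zero (φ : PowerSeries ℚ) {j m : ℕ} (h : m < j) :
    PowerSeries.coeff m (φ * (1 - catGF) ^ j) = 0 := by
  rw [one_sub_catGF_pow]
  have : φ * ((-1 : PowerSeries ℚ) ^ j * PowerSeries.X ^ j * catGF ^ (2 * j))
      = (φ * ((-1) ^ j * catGF ^ (2 * j))) * PowerSeries.X ^ j := by ring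
  rw [this, PowerSeries.coeff_mul_X_pow', if_neg (by omega)]


lemma key_sum (q : ℕ) : ∀ m : ℕ,
    ∑ j ∈ Finset.range (m + 1),
      (((j + q).choose q : ℚ)) * PowerSeries.coeff m (catGF ^ (q + 1) * (1 - catGF) ^ j)
    = if m = 0 then 1 else 0 := by
  induction q with
  | zero =>
    intro m
    have hsplit : ∀ j : ℕ, catGF ^ (0 + 1) * (1 - catGF) ^ j
        = (1 - catGF) ^ j - (1 - catGF) ^ (j + 1) := by
      intro j
      have : catGF = 1 - (1 - catGF) := by ring
      rw [pow_one]
      nth_rewrite 1 [this]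
      ring
    simp only [hsplit, map_sub, Nat.choose_zero_right, Nat.cast_one, one_mul]
    rw [Finset.sum_range_sub' (fun j => PowerSeries.coeff m ((1 - catGF) ^ j))]
    have hz : PowerSeries.coeff m ((1 - catGF) ^ (m + 1)) = 0 := by
      simpa using coeff_mul_one_sub_pow_eq_zero 1 (show m < m + 1 by omega)
    rw [hz]
    simp [PowerSeries.coeff_one]
  | succ q ih =>
    intro m
    set g : ℕ → ℚ := fun j =>
      (((j + q).choose (q+1) : ℚ)) * PowerSeries.coeff m (catGF ^ (q + 1) * (1 - catGF) ^ j)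
      with hg
    have hsplit : ∀ j : ℕ, catGF ^ (q + 1 + 1) * (1 - catGF) ^ j
        = catGF ^ (q + 1) * (1 - catGF) ^ j - catGF ^ (q + 1) * (1 - catGF) ^ (j + 1) := by
      intro j
      have h1 : catGF ^ (q+1+1) = catGF ^ (q+1) - catGF ^ (q+1) * (1 - catGF) := by ring
      rw [h1]; ring
    simp only [hsplit, map_sub, mul_sub]
    rw [Finset.sum_sub_distrib]
    have e1 := Finset.sum_range_succ' g (m+1)
    have e2 := Finset.sum_range_succ g (m+1)
    have hg0 : g 0 = 0 := by
      simp only [hg, zero_add, Nat.choose_eq_zero_of_lt (show q < q + 1 by omega)]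
      simp
    have hgm : g (m+1) = 0 := by
      simp only [hg]
      rw [coeff_mul_one_sub_pow_eq_zero _ (show m < m + 1 by omega), mul_zero]
    rw [hg0, add_zero] at e1
    rw [hgm, add_zero] at e2
    have h2 : ∑ j ∈ Finset.range (m+1),
        (((j + (q+1)).choose (q+1) : ℚ)) *
          PowerSeries.coeff m (catGF ^ (q + 1) * (1 - catGF) ^ (j + 1))
        = ∑ j ∈ Finset.range (m+1), g j := by
      rw [← e2, e1]
      apply Finset.sum_congr rfl
      intro j _
      simp only [hg]
      congr 3
      omega
    rw [h2, ← Finset.sum_sub_distrib, ← ih m]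
    apply Finset.sum_congr rfl
    intro j _
    simp only [hg]
    rw [← sub_mul]
    congr 1
    have pascal : (j + q + 1).choose (q + 1) = (j + q).choose q + (j + q).choose (q + 1) :=
      Nat.choose_succ_succ (j + q) q
    have hj : j + (q + 1) = j + q + 1 := by omega
    rw [hj, pascal]
    push_cast
    ring

lemma B_lemma (p m : ℕ) (hpm : p ≤ m) :
    ∑ j ∈ Finset.range (m - p + 1),
      ((-1 : ℚ)) ^ j * ((j + 2*p).choose (2*p) : ℚ) *
        PowerSeries.coeff (m - p - j) (catGF ^ (2 * (j + p) + 1))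
    = if m = p then 1 else 0 := by
  have h := key_sum (2*p) (m - p)
  have hco : ∀ j ∈ Finset.range (m - p + 1),
      (((j + 2*p).choose (2*p) : ℚ)) *
        PowerSeries.coeff (m - p) (catGF ^ (2*p + 1) * (1 - catGF) ^ j)
      = ((-1 : ℚ)) ^ j * ((j + 2*p).choose (2*p) : ℚ) *
        PowerSeries.coeff (m - p - j) (catGF ^ (2 * (j + p) + 1)) := by
    intro j hj
    rw [Finset.mem_range] at hj
    rw [one_sub_catGF_pow]
    have hre : catGF ^ (2*p + 1) * ((-1 : PowerSeries ℚ) ^ j * PowerSeries.X ^ j * catGF ^ (2 * j))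
        = ((-1 : PowerSeries ℚ) ^ j * catGF ^ (2 * (j + p) + 1)) * PowerSeries.X ^ j := by
      rw [show 2 * (j + p) + 1 = (2*p+1) + 2*j by omega, pow_add]
      ring
    rw [hre, PowerSeries.coeff_mul_X_pow', if_pos (by omega)]
    have hC : ((-1 : PowerSeries ℚ) ^ j) = PowerSeries.C ((-1 : ℚ) ^ j) := by
      rw [map_pow, map_neg, map_one]
    rw [hC, PowerSeries.coeff_C_mul]
    ring
  rw [← Finset.sum_congr rfl hco, h]
  congr 1
  simp only [eq_iff_iff]
  omega

section EXT
variable {α : Type*} [Fintype α] [DecidableEq α]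

lemma card_perm_extend (f : α → α) (R : Finset α)
    (hinj : ∀ x ∈ R, ∀ y ∈ R, f x = f y → x = y) :
    (Finset.univ.filter fun π : Equiv.Perm α => ∀ i ∈ R, π i = f i).card
      = (Fintype.card α - R.card).factorial := by
  classical
  have hcard : (Finset.univ.filter fun π : Equiv.Perm α => ∀ i ∈ R, π i = f i).card
      = Fintype.card {π : Equiv.Perm α // ∀ i ∈ R, π i = f i} := by
    rw [Fintype.card_subtype]
  rw [hcard]
  -- the equivalence between rows-in-R and their images
  have himg : ∀ x ∈ R, f x ∈ R.image f := fun x hx => Finset.mem_image_of_mem f hx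
  let eR : {x // x ∈ R} ≃ {x // x ∈ R.image f} :=
    Equiv.ofBijective (fun x => ⟨f x.1, himg x.1 x.2⟩) (by
      constructor
      · rintro ⟨x, hx⟩ ⟨y, hy⟩ h
        simp only [Subtype.mk.injEq] at h
        exact Subtype.ext (hinj x hx y hy h)
      · rintro ⟨y, hy⟩
        obtain ⟨x, hx, rfl⟩ := Finset.mem_image.mp hy
        exact ⟨⟨x, hx⟩, rfl⟩)
  -- restriction of an extending permutation to the complement
  have hresmem : ∀ (π : Equiv.Perm α), (∀ i ∈ R, π i = f i) → ∀ (x : α), x ∉ R →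
      π x ∉ R.image f := by
    intro π hπ x hx hmem
    obtain ⟨r, hr, hrx⟩ := Finset.mem_image.mp hmem
    have : π x = π r := by rw [hπ r hr, hrx]
    exact hx (π.injective this ▸ hr)
  have hresmem' : ∀ (π : Equiv.Perm α), (∀ i ∈ R, π i = f i) → ∀ (y : α), y ∉ R.image f →
      π.symm y ∉ R := by
    intro π hπ y hy hmem
    apply hy
    have : y = f (π.symm y) := by
      rw [← hπ _ hmem, Equiv.apply_symm_apply]
    rw [this]
    exact Finset.mem_image_of_mem f hmem
  let E : {π : Equiv.Perm α // ∀ i ∈ R, π i = f i} ≃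
      ({x // x ∉ R} ≃ {y // y ∉ R.image f}) :=
    { toFun := fun π =>
        { toFun := fun x => ⟨π.1 x.1, hresmem π.1 π.2 x.1 x.2⟩
          invFun := fun y => ⟨π.1.symm y.1, hresmem' π.1 π.2 y.1 y.2⟩
          left_inv := fun x => Subtype.ext (π.1.symm_apply_apply x.1)
          right_inv := fun y => Subtype.ext (π.1.apply_symm_apply y.1) }
      invFun := fun e =>
        ⟨(Equiv.sumCompl (· ∈ R)).symm.trans ((Equiv.sumCongr eR e).trans
            (Equiv.sumCompl (· ∈ R.image f))), by
          intro i hi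
          simp [Equiv.sumCompl_symm_apply_of_pos hi, eR]; rfl⟩
      left_inv := by
        rintro ⟨π, hπ⟩
        ext x
        simp only [Equiv.trans_apply]
        by_cases hx : x ∈ R
        · rw [Equiv.sumCompl_symm_apply_of_pos hx]
          simp [eR, hπ x hx]; rfl
        · rw [Equiv.sumCompl_symm_apply_of_neg hx]
          simp
      right_inv := by
        intro e
        ext x
        rcases x with ⟨x, hx⟩
        simp only [Equiv.coe_fn_mk, Equiv.trans_apply]
        rw [Equiv.sumCompl_symm_apply_of_neg hx]
        simp }
  rw [Fintype.card_congr E]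
  have hc1 : Fintype.card {x // x ∉ R} = Fintype.card α - R.card := by
    rw [Fintype.card_subtype_compl, Fintype.card_coe]
  have hc2 : Fintype.card {y // y ∉ R.image f} = Fintype.card α - R.card := by
    rw [Fintype.card_subtype_compl, Fintype.card_coe, Finset.card_image_of_injOn hinj]
  rw [Fintype.card_equiv (Fintype.equivOfCardEq (hc1.trans hc2.symm)), hc1]

end EXT

def NoTwoAdj (S : Finset ℕ) : Prop := ∀ x ∈ S, x + 1 ∉ S

instance (S : Finset ℕ) : Decidable (NoTwoAdj S) := by unfold NoTwoAdj; infer_instance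

lemma nonadj_count : ∀ ℓ k : ℕ,
    (((Finset.range ℓ).powersetCard k).filter NoTwoAdj).card = (ℓ + 1 - k).choose k := by
  intro ℓ
  induction ℓ using Nat.strong_induction_on with
  | _ ℓ ih =>
    intro k
    match ℓ, k with
    | ℓ, 0 =>
      rw [Finset.powersetCard_zero]
      rw [Finset.filter_singleton]
      simp [NoTwoAdj]
    | 0, (k+1) =>
      rw [Finset.range_zero, Finset.powersetCard_eq_empty.mpr (by simp)]
      simp
    | 1, (k+1) =>
      match k with
      | 0 =>
        have h1 : (Finset.range 1).powersetCard 1 = {{0}} := by decide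
        rw [h1, Finset.filter_singleton]
        rw [if_pos (by decide)]
        simp
      | (k+1) =>
        rw [Finset.powersetCard_eq_empty.mpr (by simp)]
        rw [Finset.filter_empty, Finset.card_empty]
        rw [Nat.choose_eq_zero_of_lt (by omega)]
    | (ℓ+2), (k+1) =>
      have key := Finset.card_filter_add_card_filter_not
        (p := fun S => (ℓ+1) ∈ S) (s := (((Finset.range (ℓ+2)).powersetCard (k+1)).filter NoTwoAdj))
      have hnot : ∀ S : Finset ℕ,
          (S ∈ (((Finset.range (ℓ+2)).powersetCard (k+1)).filter NoTwoAdj).filter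
            (fun S => ¬ (ℓ+1) ∈ S))
          ↔ (S ∈ ((Finset.range (ℓ+1)).powersetCard (k+1)).filter NoTwoAdj) := by
        intro S
        simp only [Finset.mem_filter, Finset.mem_powersetCard, Finset.subset_iff,
          Finset.mem_range]
        constructor
        · rintro ⟨⟨⟨hsub, hcard⟩, hna⟩, hmem⟩
          refine ⟨⟨fun x hx => ?_, hcard⟩, hna⟩
          have h1 := hsub hx
          have h2 : x ≠ ℓ+1 := fun hh => hmem (hh ▸ hx)
          omega
        · rintro ⟨⟨hsub, hcard⟩, hna⟩
          have hm : (ℓ+1) ∉ S := fun h => by have := hsub h; omega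
          exact ⟨⟨⟨fun x hx => by have := hsub hx; omega, hcard⟩, hna⟩, hm⟩
      have hnotc : (((Finset.range (ℓ+2)).powersetCard (k+1)).filter NoTwoAdj).filter
            (fun S => ¬ (ℓ+1) ∈ S) = ((Finset.range (ℓ+1)).powersetCard (k+1)).filter NoTwoAdj :=
        Finset.ext hnot
      have hyes : ((((Finset.range (ℓ+2)).powersetCard (k+1)).filter NoTwoAdj).filter
          (fun S => (ℓ+1) ∈ S)).card
          = (((Finset.range ℓ).powersetCard k).filter NoTwoAdj).card := by
        apply Finset.card_bij (fun S _ => S.erase (ℓ+1))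
        · rintro S hS
          simp only [Finset.mem_filter, Finset.mem_powersetCard, Finset.subset_iff,
            Finset.mem_range] at hS ⊢
          obtain ⟨⟨⟨hsub, hcard⟩, hna⟩, hmem⟩ := hS
          refine ⟨⟨fun x hx => ?_, ?_⟩, ?_⟩
          · rw [Finset.mem_erase] at hx
            obtain ⟨hne, hxS⟩ := hx
            have h2 := hsub hxS
            have h3 : x ≠ ℓ := by
              intro h; subst h
              exact hna x hxS hmem
            omega
          · rw [Finset.card_erase_of_mem hmem, hcard]; omega
          · intro x hx
            rw [Finset.mem_erase] at hx ⊢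
            intro h
            exact hna x hx.2 h.2
        · intro S hS T hT h
          simp only [Finset.mem_filter] at hS hT
          have h5 : insert (ℓ+1) (S.erase (ℓ+1)) = insert (ℓ+1) (T.erase (ℓ+1)) := by rw [h]
          rwa [Finset.insert_erase hS.2, Finset.insert_erase hT.2] at h5
        · intro T hT
          simp only [Finset.mem_filter, Finset.mem_powersetCard, Finset.subset_iff,
            Finset.mem_range] at hT
          obtain ⟨⟨hsub, hcard⟩, hna⟩ := hT
          have hnm : (ℓ+1) ∉ T := fun h => by have := hsub h; omega
          refine ⟨insert (ℓ+1) T, ?_, ?_⟩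
          · simp only [Finset.mem_filter, Finset.mem_powersetCard, Finset.subset_iff,
              Finset.mem_range]
            refine ⟨⟨⟨fun x hx => ?_, ?_⟩, ?_⟩, Finset.mem_insert_self _ _⟩
            · rw [Finset.mem_insert] at hx
              rcases hx with rfl | hx
              · omega
              · have := hsub hx; omega
            · rw [Finset.card_insert_of_notMem hnm, hcard]
            · intro x hx hx1
              rw [Finset.mem_insert] at hx hx1
              rcases hx with rfl | hx
              · rcases hx1 with h | h
                · omega
                · have := hsub h; omega
              · rcases hx1 with h | h
                · have := hsub hx; omega
                · exact hna x hx h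
          · rw [Finset.erase_insert hnm]
      rw [hnotc] at key
      rw [← key, hyes, ih (ℓ+1) (by omega) (k+1), ih ℓ (by omega) k]
      rcases Nat.lt_or_ge (ℓ+1) k with h | h
      · have e1 : ℓ + 2 + 1 - (k+1) = 0 := by omega
        have e2 : ℓ + 1 + 1 - (k+1) = 0 := by omega
        have e3 : ℓ + 1 - k = 0 := by omega
        rw [e1, e2, e3]
        rw [Nat.choose_eq_zero_of_lt (show 0 < k by omega),
          Nat.choose_eq_zero_of_lt (show 0 < k + 1 by omega)]
      · have e1 : ℓ + 2 + 1 - (k+1) = (ℓ + 1 - k) + 1 := by omega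
        have e2 : ℓ + 1 + 1 - (k+1) = (ℓ + 1 - k) := by omega
        rw [e1, e2, Nat.choose_succ_succ]

section Menage

variable {m : ℕ}

def mtarget (p : Fin m × Bool) : ℕ := (p.1 : ℕ) + p.2.toNat

def Hset (π : Equiv.Perm (Fin m)) : Finset (Fin m × Bool) :=
  Finset.univ.filter fun p => (π p.1 : ℕ) = mtarget p

def okN (N : Finset (Fin m × Bool)) : Prop :=
  (∀ p ∈ N, mtarget p < m) ∧
    ∀ p ∈ N, ∀ q ∈ N, p ≠ q → p.1 ≠ q.1 ∧ mtarget p ≠ mtarget q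

instance (N : Finset (Fin m × Bool)) : Decidable (okN N) := by unfold okN; infer_instance

lemma straight_iff_Hset_empty (π : Equiv.Perm (Fin m)) :
    IsStraightMenage π ↔ Hset π = ∅ := by
  rw [Finset.eq_empty_iff_forall_notMem]
  constructor
  · intro h p hp
    simp only [Hset, Finset.mem_filter, Finset.mem_univ, true_and] at hp
    simp only [mtarget] at hp
    obtain ⟨h1, h2⟩ := h p.1
    cases hb : p.2 <;> rw [hb] at hp <;> simp at hp
    · exact h1 (Fin.ext hp)
    · exact h2 hp
  · intro h i
    constructor
    · intro hfix
      exact h (i, false) (by simp only [Hset, Finset.mem_filter, Finset.mem_univ, true_and]; simp [mtarget, hfix])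
    · intro hsucc
      exact h (i, true) (by simp only [Hset, Finset.mem_filter, Finset.mem_univ, true_and]; simp [mtarget, hsucc])

lemma subset_Hset_iff (N : Finset (Fin m × Bool)) (π : Equiv.Perm (Fin m)) :
    N ⊆ Hset π ↔ ∀ p ∈ N, (π p.1 : ℕ) = mtarget p := by
  constructor
  · intro h p hp
    have := h hp
    simpa [Hset] using this
  · intro h p hp
    simp only [Hset, Finset.mem_filter, Finset.mem_univ, true_and]
    exact h p hp

lemma count_not_ok (N : Finset (Fin m × Bool)) (h : ¬ okN N) :
    (Finset.univ.filter fun π : Equiv.Perm (Fin m) => N ⊆ Hset π).card = 0 := by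
  rw [Finset.card_eq_zero, Finset.filter_eq_empty_iff]
  intro π _
  intro hsub
  rw [subset_Hset_iff] at hsub
  apply h
  constructor
  · intro p hp
    rw [← hsub p hp]
    exact (π p.1).isLt
  · intro p hp q hq hne
    have h1 : p.1 ≠ q.1 := by
      intro heq
      apply hne
      have : mtarget p = mtarget q := by rw [← hsub p hp, ← hsub q hq, heq]
      have hb : p.2 = q.2 := by
        simp only [mtarget, heq] at this
        cases hb1 : p.2 <;> cases hb2 : q.2 <;> rw [hb1, hb2] at this <;> simp at this <;>
          simp [hb1, hb2]
      exact Prod.ext heq hb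
    refine ⟨h1, ?_⟩
    intro heq
    apply h1
    apply π.injective
    apply Fin.ext
    rw [hsub p hp, hsub q hq, heq]

lemma count_ok (N : Finset (Fin m × Bool)) (h : okN N) :
    (Finset.univ.filter fun π : Equiv.Perm (Fin m) => N ⊆ Hset π).card
      = (m - N.card).factorial := by
  classical
  set f : Fin m → Fin m := fun i =>
    if hc : ((i, true) ∈ N ∧ (i : ℕ) + 1 < m) then (⟨(i : ℕ) + 1, hc.2⟩ : Fin m) else i with hf
  set R : Finset (Fin m) := N.image Prod.fst with hR
  -- f agrees with targets on rows of N
  have hft : ∀ p ∈ N, (f p.1 : ℕ) = mtarget p := by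
    intro p hp
    cases hb : p.2
    · have hp' : (p.1, false) ∈ N := by rw [← hb]; exact hp
      have hnt : ¬ ((p.1, true) ∈ N ∧ (p.1 : ℕ) + 1 < m) := by
        rintro ⟨ht, -⟩
        have := (h.2 _ hp' _ ht (by simp)).1
        exact this rfl
      simp [hf, hnt, mtarget, hb]
    · have hp' : (p.1, true) ∈ N := by rw [← hb]; exact hp
      have htlt : (p.1 : ℕ) + 1 < m := by
        have := h.1 p hp
        simpa [mtarget, hb] using this
      simp [hf, hp', htlt, mtarget, hb]
  have hsetseq : (Finset.univ.filter fun π : Equiv.Perm (Fin m) => N ⊆ Hset π)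
      = Finset.univ.filter fun π : Equiv.Perm (Fin m) => ∀ i ∈ R, π i = f i := by
    apply Finset.filter_congr
    intro π _
    rw [subset_Hset_iff]
    constructor
    · intro hall i hiR
      obtain ⟨p, hpN, hpi⟩ := Finset.mem_image.mp hiR
      subst hpi
      apply Fin.ext
      rw [hall p hpN, hft p hpN]
    · intro hall p hpN
      have hiR : p.1 ∈ R := Finset.mem_image_of_mem _ hpN
      rw [hall p.1 hiR, hft p hpN]
  rw [hsetseq]
  have hinj : ∀ x ∈ R, ∀ y ∈ R, f x = f y → x = y := by
    intro x hx y hy hfxy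
    by_contra hne
    obtain ⟨px, hpx, hpx1⟩ := Finset.mem_image.mp hx
    obtain ⟨py, hpy, hpy1⟩ := Finset.mem_image.mp hy
    have hpne : px ≠ py := by
      intro hcon; apply hne; rw [← hpx1, ← hpy1, hcon]
    have := (h.2 px hpx py hpy hpne).2
    apply this
    rw [← hft px hpx, ← hft py hpy, hpx1, hpy1, hfxy]
  have hcardR : R.card = N.card := by
    rw [hR]
    apply Finset.card_image_of_injOn
    intro p hp q hq hpq
    by_contra hne
    exact (h.2 p hp q hq hne).1 hpq
  have hext := card_perm_extend f R hinj
  simp only [Fintype.card_fin] at hext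
  rw [hcardR] at hext
  rw [← hext]
  convert rfl

def mcode {m : ℕ} (p : Fin m × Bool) : ℕ := 2 * (p.1 : ℕ) + p.2.toNat

lemma mcode_mk {m : ℕ} (i : Fin m) (b : Bool) : mcode (i, b) = 2 * (i : ℕ) + b.toNat := rfl

lemma mtarget_mk {m : ℕ} (i : Fin m) (b : Bool) : mtarget (i, b) = (i : ℕ) + b.toNat := rfl

lemma mcode_inj {m : ℕ} : Function.Injective (mcode (m := m)) := by
  rintro ⟨i, b⟩ ⟨j, c⟩ hpq
  have hpq2 : 2 * (i : ℕ) + b.toNat = 2 * (j : ℕ) + c.toNat := hpq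
  clear hpq
  cases b <;> cases c <;>
      simp only [Bool.toNat_false, Bool.toNat_true] at hpq2
  · exact Prod.ext (Fin.ext (show (i : ℕ) = (j : ℕ) by omega)) rfl
  · exact absurd hpq2 (by omega)
  · exact absurd hpq2 (by omega)
  · exact Prod.ext (Fin.ext (show (i : ℕ) = (j : ℕ) by omega)) rfl

lemma card_ok_sets (k : ℕ) :
    (((Finset.univ : Finset (Fin m × Bool)).powersetCard k).filter okN).card
      = (2 * m - k).choose k := by
  classical
  have hbij : (((Finset.univ : Finset (Fin m × Bool)).powersetCard k).filter okN).card
      = (((Finset.range (2*m - 1)).powersetCard k).filter NoTwoAdj).card := by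
    apply Finset.card_bij (fun N _ => N.image mcode)
    · intro N hN
      simp only [Finset.mem_filter, Finset.mem_powersetCard] at hN ⊢
      obtain ⟨⟨-, hcard⟩, hok⟩ := hN
      refine ⟨⟨fun x hx => ?_, ?_⟩, ?_⟩
      · obtain ⟨p, hp, rfl⟩ := Finset.mem_image.mp hx
        have h2 : mtarget p < m := hok.1 p hp
        obtain ⟨i, b⟩ := p
        have h1 : (i : ℕ) < m := i.isLt
        rw [Finset.mem_range]
        simp only [mcode_mk, mtarget_mk] at h2 ⊢
        cases b <;> simp only [Bool.toNat_false, Bool.toNat_true] at h2 ⊢ <;> omega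
      · rw [Finset.card_image_of_injective _ mcode_inj, hcard]
      · intro x hx hx1
        obtain ⟨p, hp, hpx⟩ := Finset.mem_image.mp hx
        obtain ⟨q, hq, hqx⟩ := Finset.mem_image.mp hx1
        have hpq : p ≠ q := by
          intro hcon
          rw [hcon, hqx] at hpx
          omega
        obtain ⟨hrow, htar⟩ := hok.2 p hp q hq hpq
        obtain ⟨i, b⟩ := p
        obtain ⟨j, c⟩ := q
        have hr : (i : ℕ) ≠ (j : ℕ) := fun hcon => hrow (Fin.ext hcon)
        simp only [mtarget_mk, mcode_mk] at htar hpx hqx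
        cases b <;> cases c <;>
          simp only [Bool.toNat_false, Bool.toNat_true] at htar hpx hqx <;> omega
    · intro N hN M hM himg
      exact Finset.image_injective mcode_inj himg
    · intro T hT
      simp only [Finset.mem_filter, Finset.mem_powersetCard] at hT
      obtain ⟨⟨hsub, hcard⟩, hna⟩ := hT
      have hlt : ∀ c ∈ T, c < 2 * m - 1 := by
        intro c hc
        have := hsub hc
        rwa [Finset.mem_range] at this
      have hm0 : ∀ c ∈ T, c / 2 < m := by intro c hc; have := hlt c hc; omega
      set dec : {x // x ∈ T} → Fin m × Bool :=
        fun c => (⟨c.1 / 2, hm0 c.1 c.2⟩, c.1 % 2 = 1) with hdec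
      have hcodedec : ∀ c : {x // x ∈ T}, mcode (dec c) = c.1 := by
        intro c
        simp only [hdec, mcode]
        by_cases hpar : c.1 % 2 = 1 <;> simp [hpar] <;> omega
      have hdecinj : Function.Injective dec := by
        intro a b hab
        have : mcode (dec a) = mcode (dec b) := by rw [hab]
        rw [hcodedec, hcodedec] at this
        exact Subtype.ext this
      refine ⟨T.attach.image dec, ?_, ?_⟩
      · simp only [Finset.mem_filter, Finset.mem_powersetCard]
        refine ⟨⟨Finset.subset_univ _, ?_⟩, ?_, ?_⟩
        · rw [Finset.card_image_of_injective _ hdecinj, Finset.card_attach, hcard]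
        · -- targets < m
          intro p hp
          obtain ⟨c, -, rfl⟩ := Finset.mem_image.mp hp
          have hc := hlt c.1 c.2
          simp only [hdec, mtarget]
          by_cases hpar : c.1 % 2 = 1 <;> simp [hpar] <;> omega
        · -- distinct rows and targets
          intro p hp q hq hpq
          obtain ⟨c, -, rfl⟩ := Finset.mem_image.mp hp
          obtain ⟨d, -, rfl⟩ := Finset.mem_image.mp hq
          have hcd : c.1 ≠ d.1 := by
            intro hcon
            exact hpq (congrArg dec (Subtype.ext hcon))
          have hna1 : ¬ (d.1 = c.1 + 1) := fun hcon => hna c.1 c.2 (hcon ▸ d.2)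
          have hna2 : ¬ (c.1 = d.1 + 1) := fun hcon => hna d.1 d.2 (hcon ▸ c.2)
          constructor
          · intro hcon
            have h9 : (c.1 / 2 : ℕ) = d.1 / 2 := by
              have := congrArg (fun x : Fin m => (x : ℕ)) hcon
              simpa [hdec] using this
            omega
          · simp only [hdec, mtarget]
            by_cases h1 : c.1 % 2 = 1 <;> by_cases h2 : d.1 % 2 = 1 <;>
              simp [h1, h2] <;> omega
      · rw [Finset.image_image]
        have himg : Finset.image (mcode ∘ dec) T.attach
            = Finset.image Subtype.val T.attach :=
          Finset.image_congr (fun c _ => hcodedec c)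
        rw [himg, Finset.attach_image_val]
  rw [hbij, nonadj_count]
  rcases Nat.eq_zero_or_pos m with rfl | hm
  · rcases Nat.eq_zero_or_pos k with rfl | hk
    · rfl
    · congr 1
      omega
  · congr 1
    omega

end Menage

lemma menage_IE (m : ℕ) : (straightMenage m : ℤ) =
    ∑ k ∈ Finset.range (m + 1),
      (-1 : ℤ) ^ k * ((2 * m - k).choose k : ℤ) * ((m - k).factorial : ℤ) := by
  classical
  have h1 : (straightMenage m : ℤ)
      = ∑ π : Equiv.Perm (Fin m), (if Hset π = ∅ then (1 : ℤ) else 0) := by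
    rw [straightMenage, Finset.card_filter]
    push_cast
    apply Finset.sum_congr rfl
    intro π _
    exact if_congr (straight_iff_Hset_empty π) rfl rfl
  rw [h1]
  have h2 : ∀ π : Equiv.Perm (Fin m), (if Hset π = ∅ then (1 : ℤ) else 0)
      = ∑ N ∈ (Finset.univ : Finset (Fin m × Bool)).powerset,
          (if N ⊆ Hset π then (-1 : ℤ) ^ N.card else 0) := by
    intro π
    rw [← Finset.sum_powerset_neg_one_pow_card (x := Hset π)]
    rw [← Finset.sum_filter]
    congr 1
    ext N
    simp [Finset.mem_powerset]
  simp only [h2]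
  rw [Finset.sum_comm]
  have h3 : ∀ N : Finset (Fin m × Bool),
      ∑ π : Equiv.Perm (Fin m), (if N ⊆ Hset π then (-1 : ℤ) ^ N.card else 0)
      = (-1 : ℤ) ^ N.card *
          ((Finset.univ.filter fun π : Equiv.Perm (Fin m) => N ⊆ Hset π).card : ℤ) := by
    intro N
    rw [← Finset.sum_filter, Finset.sum_const, nsmul_eq_mul, mul_comm]
  simp only [h3]
  rw [← Finset.sum_filter_add_sum_filter_not _ okN]
  have h4 : ∑ N ∈ ((Finset.univ : Finset (Fin m × Bool)).powerset.filter fun N => ¬ okN N),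
      (-1 : ℤ) ^ N.card *
        ((Finset.univ.filter fun π : Equiv.Perm (Fin m) => N ⊆ Hset π).card : ℤ) = 0 := by
    apply Finset.sum_eq_zero
    intro N hN
    rw [Finset.mem_filter] at hN
    rw [count_not_ok N hN.2]
    simp
  rw [h4, add_zero]
  have h5 : ∀ N ∈ ((Finset.univ : Finset (Fin m × Bool)).powerset.filter okN),
      (-1 : ℤ) ^ N.card *
        ((Finset.univ.filter fun π : Equiv.Perm (Fin m) => N ⊆ Hset π).card : ℤ)
      = (-1 : ℤ) ^ N.card * ((m - N.card).factorial : ℤ) := by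
    intro N hN
    rw [Finset.mem_filter] at hN
    rw [count_ok N hN.2]
  rw [Finset.sum_congr rfl h5]
  -- group by cardinality
  have h6 : ∀ N ∈ ((Finset.univ : Finset (Fin m × Bool)).powerset.filter okN),
      N.card ∈ Finset.range (2 * m + 1) := by
    intro N _
    rw [Finset.mem_range]
    have := Finset.card_le_univ N
    have hcu : Fintype.card (Fin m × Bool) = 2 * m := by
      simp [mul_comm]
    omega
  rw [← Finset.sum_fiberwise_of_maps_to' h6
    (fun k => (-1 : ℤ) ^ k * ((m - k).factorial : ℤ))]
  have h7 : ∀ k ∈ Finset.range (2 * m + 1),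
      ∑ N ∈ (((Finset.univ : Finset (Fin m × Bool)).powerset.filter okN).filter
          fun N => N.card = k),
        ((-1 : ℤ) ^ k * ((m - k).factorial : ℤ))
      = ((2 * m - k).choose k : ℤ) * ((-1 : ℤ) ^ k * ((m - k).factorial : ℤ)) := by
    intro k _
    rw [Finset.sum_const, nsmul_eq_mul]
    congr 1
    have heq : (((Finset.univ : Finset (Fin m × Bool)).powerset.filter okN).filter
          fun N => N.card = k)
        = ((Finset.univ : Finset (Fin m × Bool)).powersetCard k).filter okN := by
      rw [Finset.powersetCard_eq_filter, Finset.filter_comm]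
    rw [heq, card_ok_sets]
  rw [Finset.sum_congr rfl h7]
  rw [← Finset.sum_subset (Finset.range_subset_range.mpr (show m + 1 ≤ 2 * m + 1 by omega))]
  · apply Finset.sum_congr rfl
    intro k _
    ring
  · intro k hk hknot
    rw [Finset.mem_range] at hk
    rw [Finset.mem_range] at hknot
    rw [Nat.choose_eq_zero_of_lt (by omega)]
    simp

lemma menage_formula (n : ℕ) : (straightMenage n : ℚ) =
    ∑ p ∈ Finset.range (n+1),
      (-1:ℚ)^(n-p) * (((n+p).choose (2*p) : ℕ) : ℚ) * (p.factorial : ℚ) := by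
  have hZ := menage_IE n
  have hQ : (straightMenage n : ℚ) = ∑ k ∈ Finset.range (n+1),
      (-1:ℚ)^k * ((2*n-k).choose k : ℚ) * ((n-k).factorial : ℚ) := by
    have h0 := congrArg (fun z : ℤ => (z : ℚ)) hZ
    push_cast at h0
    exact h0
  rw [hQ, ← Finset.sum_range_reflect]
  apply Finset.sum_congr rfl
  intro p hp
  rw [Finset.mem_range] at hp
  have h1 : n + 1 - 1 - p = n - p := by omega
  rw [h1]
  have h2 : 2*n - (n-p) = n + p := by omega
  have h3 : n - (n - p) = p := by omega
  rw [h2, h3]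
  have h4 : (n+p).choose (n-p) = (n+p).choose (2*p) := by
    rw [← Nat.choose_symm (show n - p ≤ n + p by omega)]
    congr 1
    omega
  rw [h4]

/-- `∑_{n≥0} n! x^n = ∑_{n≥0} V_n x^n c(x)^{2n+1}`.  Since the `n`-th summand on the right is
divisible by `x^n`, the sum is formally summable and its coefficient of `x^m` is the finite sum
`∑_{n=0}^{m} V_n · [x^{m-n}] c(x)^{2n+1}`. -/
theorem straight_menage_gf :
    (PowerSeries.mk fun n => (n.factorial : ℚ)) =
      PowerSeries.mk fun m =>
        ∑ n ∈ Finset.range (m + 1),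
          (straightMenage n : ℚ) * PowerSeries.coeff (R := ℚ) (m - n) (catGF ^ (2 * n + 1)) := by
  ext m
  rw [PowerSeries.coeff_mk, PowerSeries.coeff_mk]
  set A : ℕ → ℚ := fun n => PowerSeries.coeff (m - n) (catGF ^ (2 * n + 1)) with hA
  have step1 : ∑ n ∈ Finset.range (m + 1), (straightMenage n : ℚ) * A n
      = ∑ n ∈ Finset.range (m + 1), ∑ p ∈ Finset.range (m + 1),
          (if p ≤ n then (-1:ℚ)^(n-p) * (((n+p).choose (2*p) : ℕ) : ℚ)
            * (p.factorial : ℚ) * A n else 0) := by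
    apply Finset.sum_congr rfl
    intro n hn
    rw [Finset.mem_range] at hn
    rw [menage_formula, Finset.sum_mul]
    rw [← Finset.sum_filter]
    have hfil : (Finset.range (m+1)).filter (fun p => p ≤ n) = Finset.range (n+1) := by
      ext p; simp only [Finset.mem_filter, Finset.mem_range]; omega
    rw [hfil]
  rw [step1, Finset.sum_comm]
  have step2 : ∀ p ∈ Finset.range (m + 1),
      ∑ n ∈ Finset.range (m + 1),
        (if p ≤ n then (-1:ℚ)^(n-p) * (((n+p).choose (2*p) : ℕ) : ℚ)
          * (p.factorial : ℚ) * A n else 0)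
      = (p.factorial : ℚ) * (if m = p then 1 else 0) := by
    intro p hp
    rw [Finset.mem_range] at hp
    rw [Finset.sum_ite, Finset.sum_const_zero, add_zero]
    have hfil : (Finset.range (m+1)).filter (fun n => p ≤ n) = Finset.Ico p (m+1) := by
      ext n; simp only [Finset.mem_filter, Finset.mem_range, Finset.mem_Ico]; omega
    rw [hfil, Finset.sum_Ico_eq_sum_range]
    have hrange : m + 1 - p = m - p + 1 := by omega
    rw [hrange]
    rw [← B_lemma p m (by omega), Finset.mul_sum]
    apply Finset.sum_congr rfl
    intro j hj
    rw [Finset.mem_range] at hj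
    have h1 : p + j - p = j := by omega
    have h2 : m - (p + j) = m - p - j := by omega
    have h3 : 2 * (p + j) + 1 = 2 * (j + p) + 1 := by omega
    have h4 : (p + j) + p = j + 2 * p := by omega
    have h5 : 2 * p = 2 * p := rfl
    simp only [hA, h1, h2, h3, h4]
    ring
  rw [Finset.sum_congr rfl step2]
  simp only [mul_ite, mul_one, mul_zero]
  rw [Finset.sum_ite_eq (Finset.range (m+1)) m (fun p => (p.factorial : ℚ))]
  simp
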